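/- Let 𝔽_q be a finite field whose characteristic is greater than c, where c ≥ 2 is an integer, let χ : 𝔽_q → ℂ be a nontrivial additive character, let a₁, a₂, a₃ ∈ 𝔽_q ∖ {0}, and let H₀ = {x ∈ 𝔽_q³ : a₁x₁^c + a₂x₂^c + a₃x₃^c = 0}. Then for every m ∈ 𝔽_q³ ∖ {0} one has |Σ_{x∈H₀} χ(m·x)| ≤ c·q²/(q − 1); in particular |Ĥ₀(m)| ≲ q^{−2}. -/

import Mathlib

open Polynomial Finset

set_option linter.unusedSectionVars false
set_option maxHeartbeats 1000000

section Aux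
variable {F : Type} [Field F] [Fintype F] [DecidableEq F]

private lemma root_count_le' (p : F[X]) (hp : p ≠ 0) :
    (Finset.univ.filter fun y => p.eval y = 0).card ≤ p.natDegree := by
  have h1 : (Finset.univ.filter fun y => p.eval y = 0) ⊆ p.roots.toFinset := by
    intro y hy
    simp only [Finset.mem_filter] at hy
    rw [Multiset.mem_toFinset, Polynomial.mem_roots']
    exact ⟨hp, hy.2⟩
  exact (Finset.card_le_card h1).trans ((p.roots.toFinset_card_le).trans p.card_roots')

private lemma coeff_bin' (w k : F) (n j : ℕ) :
    ((C w + C k * X : F[X]) ^ n).coeff j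
      = (n.choose j : F) * w ^ (n - j) * k ^ j := by
  rcases le_or_gt j n with h | h
  · by_cases hk : k = 0
    · subst hk
      rw [C_0, zero_mul, add_zero, ← C_pow, coeff_C]
      rcases eq_or_ne j 0 with rfl | hj
      · simp
      · simp [hj, zero_pow hj]
    · have key : (C w + C k * X : F[X]) = C k * (X + C (w * k⁻¹)) := by
        rw [mul_add, ← C_mul, mul_comm w, ← mul_assoc, mul_inv_cancel₀ hk, one_mul, add_comm]
      rw [key, mul_pow, ← C_pow, coeff_C_mul, coeff_X_add_C_pow]
      have hkn : (k : F) ^ n = k ^ j * k ^ (n - j) := by rw [← pow_add]; congr 1; omega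
      rw [hkn, mul_pow, inv_pow]
      field_simp
  · have hd : ((C w + C k * X : F[X]) ^ n).natDegree < j := by
      calc ((C w + C k * X : F[X]) ^ n).natDegree ≤ n * (C w + C k * X : F[X]).natDegree :=
            natDegree_pow_le
        _ ≤ n * 1 := by
            refine Nat.mul_le_mul_left _ ?_
            refine (natDegree_add_le _ _).trans (max_le (by simp) ?_)
            exact (natDegree_C_mul_le _ _).trans natDegree_X_le
        _ < j := by omega
    rw [coeff_eq_zero_of_natDegree_lt hd, Nat.choose_eq_zero_of_lt h]
    simp

private lemma coeff_P' (b0 b1 b2 l k u : F) (c j : ℕ) :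
    ((C (b0 * u ^ c) + C b1 * X ^ c + C b2 * (C (l * u) + C k * X) ^ c : F[X])).coeff j
      = (if j = 0 then b0 * u ^ c else 0) + (if j = c then b1 else 0)
        + b2 * ((c.choose j : F) * (l * u) ^ (c - j) * k ^ j) := by
  rw [coeff_add, coeff_add, coeff_C, coeff_C_mul, coeff_X_pow, coeff_C_mul, coeff_bin']
  simp [mul_ite]

private lemma eval_P' (b0 b1 b2 l k u v : F) (c : ℕ) :
    ((C (b0 * u ^ c) + C b1 * X ^ c + C b2 * (C (l * u) + C k * X) ^ c : F[X])).eval v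
      = b0 * u ^ c + b1 * v ^ c + b2 * (l * u + k * v) ^ c := by
  simp

private lemma rowA' (c : ℕ) (hc : 2 ≤ c) (b0 b1 b2 l k u : F)
    (hA : b1 + b2 * k ^ c ≠ 0) :
    (Finset.univ.filter fun v : F =>
        b0 * u ^ c + b1 * v ^ c + b2 * (l * u + k * v) ^ c = 0).card ≤ c := by
  set P : F[X] := C (b0 * u ^ c) + C b1 * X ^ c + C b2 * (C (l * u) + C k * X) ^ c with hP
  have hcc : P.coeff c = b1 + b2 * k ^ c := by
    rw [hP, coeff_P', Nat.choose_self, Nat.sub_self, pow_zero,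
      if_pos rfl, if_neg (by omega : ¬ c = 0)]
    push_cast
    ring
  have hne : P ≠ 0 := fun h => hA (by rw [← hcc, h, coeff_zero])
  have hdeg : P.natDegree ≤ c := by
    rw [natDegree_le_iff_coeff_eq_zero]
    intro N hN
    rw [hP, coeff_P', Nat.choose_eq_zero_of_lt hN,
      if_neg (by omega : ¬ N = 0), if_neg (by omega : ¬ N = c)]
    simp
  have heq : (Finset.univ.filter fun v : F =>
      b0 * u ^ c + b1 * v ^ c + b2 * (l * u + k * v) ^ c = 0)
      = (Finset.univ.filter fun v : F => P.eval v = 0) := by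
    apply Finset.filter_congr
    intro v _
    rw [hP, eval_P']
  rw [heq]
  exact le_trans (root_count_le' P hne) hdeg

private lemma rowB' (c : ℕ) (hc : 2 ≤ c) (hchar : c < ringChar F)
    (b0 b1 b2 l k u : F) (hb0 : b0 ≠ 0) (hb1 : b1 ≠ 0) (hb2 : b2 ≠ 0) (hu : u ≠ 0)
    (hA : b1 + b2 * k ^ c = 0) :
    (Finset.univ.filter fun v : F =>
        b0 * u ^ c + b1 * v ^ c + b2 * (l * u + k * v) ^ c = 0).card ≤ c - 1 := by
  have hcF : (c : F) ≠ 0 := by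
    intro h
    have hdvd := (ringChar.spec F c).mp h
    have := Nat.le_of_dvd (by omega) hdvd
    omega
  have hk : k ≠ 0 := by
    intro h
    rw [h, zero_pow (by omega : c ≠ 0), mul_zero, add_zero] at hA
    exact hb1 hA
  set P : F[X] := C (b0 * u ^ c) + C b1 * X ^ c + C b2 * (C (l * u) + C k * X) ^ c with hP
  have hdeg : P.natDegree ≤ c - 1 := by
    rw [natDegree_le_iff_coeff_eq_zero]
    intro N hN
    rcases eq_or_lt_of_le (show c ≤ N by omega) with rfl | hlt
    · rw [hP, coeff_P', Nat.choose_self, Nat.sub_self, pow_zero,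
        if_pos rfl, if_neg (by omega : ¬ c = 0)]
      simpa using hA
    · rw [hP, coeff_P', Nat.choose_eq_zero_of_lt hlt,
        if_neg (by omega : ¬ N = 0), if_neg (by omega : ¬ N = c)]
      simp
  have hne : P ≠ 0 := by
    by_cases hw : l * u = 0
    · have hc0 : P.coeff 0 = b0 * u ^ c := by
        rw [hP, coeff_P', hw, zero_pow (by omega : c - 0 ≠ 0),
          if_pos rfl, if_neg (by omega : ¬ (0:ℕ) = c)]
        ring
      intro h
      rw [h, coeff_zero] at hc0
      exact (mul_ne_zero hb0 (pow_ne_zero _ hu)) hc0.symm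
    · have hc1 : P.coeff (c - 1) = b2 * ((c : F) * (l * u) * k ^ (c - 1)) := by
        rw [hP, coeff_P', if_neg (by omega : ¬ c - 1 = 0), if_neg (by omega : ¬ c - 1 = c),
          show c.choose (c - 1) = c by
            rw [Nat.choose_symm (by omega : 1 ≤ c), Nat.choose_one_right],
          show c - (c - 1) = 1 by omega, pow_one]
        ring
      intro h
      rw [h, coeff_zero] at hc1
      exact (mul_ne_zero hb2 (mul_ne_zero (mul_ne_zero hcF hw) (pow_ne_zero _ hk))) hc1.symm
  have heq : (Finset.univ.filter fun v : F =>
      b0 * u ^ c + b1 * v ^ c + b2 * (l * u + k * v) ^ c = 0)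
      = (Finset.univ.filter fun v : F => P.eval v = 0) := by
    apply Finset.filter_congr
    intro v _
    rw [hP, eval_P']
  rw [heq]
  exact le_trans (root_count_le' P hne) hdeg

private lemma keyN' (c : ℕ) (hc : 2 ≤ c) (hchar : c < ringChar F)
    (b : Fin 3 → F) (hb : ∀ i, b i ≠ 0) (n : Fin 3 → F) (hn : n 2 ≠ 0) :
    (Finset.univ.filter fun x : Fin 3 → F =>
        ∑ i, b i * x i ^ c = 0 ∧ ∑ i, n i * x i = 0).card
      ≤ c * Fintype.card F := by
  classical
  set q := Fintype.card F with hq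
  clear_value q
  set l : F := -(n 0) / n 2 with hl
  set k : F := -(n 1) / n 2 with hk
  set T : Finset (F × F) := Finset.univ.filter fun p =>
    b 0 * p.1 ^ c + b 1 * p.2 ^ c + b 2 * (l * p.1 + k * p.2) ^ c = 0 with hT
  have h1 : (Finset.univ.filter fun x : Fin 3 → F =>
      ∑ i, b i * x i ^ c = 0 ∧ ∑ i, n i * x i = 0).card ≤ T.card := by
    apply Finset.card_le_card_of_injOn (fun x => (x 0, x 1))
    · intro x hx
      simp only [Finset.mem_coe, Finset.mem_filter, Finset.mem_univ, true_and, Fin.sum_univ_three] at hx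
      obtain ⟨hx1, hx2⟩ := hx
      have hx3 : x 2 = l * x 0 + k * x 1 := by
        apply mul_left_cancel₀ hn
        have e : n 2 * (l * x 0 + k * x 1) = -(n 0 * x 0) - n 1 * x 1 := by
          rw [hl, hk]
          field_simp
          ring
        rw [e]
        linear_combination hx2
      simp only [Finset.mem_coe, hT, Finset.mem_filter, Finset.mem_univ, true_and]
      rw [← hx3]
      exact hx1
    · intro x hx y hy hxy
      simp only [Finset.coe_filter, Set.mem_setOf_eq, Finset.mem_univ, true_and,
        Fin.sum_univ_three] at hx hy
      have e0 : x 0 = y 0 := congrArg Prod.fst hxy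
      have e1 : x 1 = y 1 := congrArg Prod.snd hxy
      have e2 : x 2 = y 2 := by
        apply mul_left_cancel₀ hn
        linear_combination hx.2 - hy.2 - n 0 * e0 - n 1 * e1
      funext i
      fin_cases i <;> assumption
  have h2 : T.card = ∑ u : F, (T.filter fun p => p.1 = u).card :=
    Finset.card_eq_sum_card_fiberwise (fun p _ => Finset.mem_univ _)
  set R : F → ℕ := fun u => (Finset.univ.filter fun v : F =>
    b 0 * u ^ c + b 1 * v ^ c + b 2 * (l * u + k * v) ^ c = 0).card with hR
  have h3 : ∀ u, (T.filter fun p => p.1 = u).card ≤ R u := by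
    intro u
    apply Finset.card_le_card_of_injOn Prod.snd
    · intro p hp
      simp only [Finset.mem_coe, hT, Finset.mem_filter, Finset.mem_univ, true_and] at hp
      obtain ⟨hp1, hp2⟩ := hp
      simp only [Finset.mem_coe, Finset.mem_filter, Finset.mem_univ, true_and]
      rw [← hp2]
      exact hp1
    · intro p hp q' hq' h
      simp only [Finset.coe_filter, Set.mem_setOf_eq] at hp hq'
      exact Prod.ext (hp.2.trans hq'.2.symm) h
  by_cases hA : b 1 + b 2 * k ^ c = 0
  · have hrow0 : R 0 ≤ q := by
      rw [hq, ← Finset.card_univ]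
      exact Finset.card_filter_le _ _
    have hrows : ∀ u : F, u ≠ 0 → R u ≤ c - 1 := fun u hu =>
      rowB' c hc hchar (b 0) (b 1) (b 2) l k u (hb 0) (hb 1) (hb 2) hu hA
    have hsplit : ∑ u : F, R u = R 0 + ∑ u ∈ Finset.univ.erase 0, R u :=
      (Finset.add_sum_erase _ _ (Finset.mem_univ 0)).symm
    have htail : ∑ u ∈ Finset.univ.erase 0, R u ≤ (q - 1) * (c - 1) := by
      calc ∑ u ∈ Finset.univ.erase 0, R u ≤ (Finset.univ.erase (0:F)).card * (c - 1) := by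
            apply Finset.sum_le_card_nsmul
            intro u hu
            exact hrows u (Finset.ne_of_mem_erase hu)
        _ = (q - 1) * (c - 1) := by
            rw [Finset.card_erase_of_mem (Finset.mem_univ _), Finset.card_univ, ← hq]
    have hq1 : 1 ≤ q := hq ▸ Fintype.card_pos
    calc (Finset.univ.filter fun x : Fin 3 → F =>
        ∑ i, b i * x i ^ c = 0 ∧ ∑ i, n i * x i = 0).card
        ≤ T.card := h1
      _ = ∑ u : F, (T.filter fun p => p.1 = u).card := h2
      _ ≤ ∑ u : F, R u := Finset.sum_le_sum fun u _ => h3 u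
      _ = R 0 + ∑ u ∈ Finset.univ.erase 0, R u := hsplit
      _ ≤ q + (q - 1) * (c - 1) := Nat.add_le_add hrow0 htail
      _ ≤ q + q * (c - 1) :=
          Nat.add_le_add_left (Nat.mul_le_mul_right _ (Nat.sub_le _ _)) q
      _ = q * (1 + (c - 1)) := by ring
      _ = q * c := by rw [Nat.add_sub_cancel' (Nat.le_of_succ_le hc)]
      _ = c * q := Nat.mul_comm _ _
  · have hrows : ∀ u : F, R u ≤ c := fun u =>
      rowA' c hc (b 0) (b 1) (b 2) l k u hA
    calc (Finset.univ.filter fun x : Fin 3 → F =>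
        ∑ i, b i * x i ^ c = 0 ∧ ∑ i, n i * x i = 0).card
        ≤ T.card := h1
      _ = ∑ u : F, (T.filter fun p => p.1 = u).card := h2
      _ ≤ ∑ u : F, R u := Finset.sum_le_sum fun u _ => h3 u
      _ ≤ Finset.univ.card * c := Finset.sum_le_card_nsmul _ _ _ fun u _ => hrows u
      _ = c * q := by rw [Finset.card_univ, Nat.mul_comm, hq]

private lemma cardH' (c : ℕ) (hc : 2 ≤ c) (b : Fin 3 → F) (hb2 : b 2 ≠ 0)
    (H : Finset (Fin 3 → F)) (hH : ∀ x, x ∈ H ↔ ∑ i, b i * x i ^ c = 0) :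
    H.card ≤ c * Fintype.card F ^ 2 := by
  classical
  have key : ∀ p ∈ H.image (fun x => (x 0, x 1)),
      (H.filter fun x => (x 0, x 1) = p).card ≤ c := by
    intro p _
    set Q : F[X] := C (b 0 * p.1 ^ c + b 1 * p.2 ^ c) + C (b 2) * X ^ c with hQ
    have hcc : Q.coeff c = b 2 := by
      rw [hQ, coeff_add, coeff_C, coeff_C_mul, coeff_X_pow,
        if_neg (by omega : ¬ c = 0), if_pos rfl]
      ring
    have hne : Q ≠ 0 := fun h => hb2 (by rw [← hcc, h, coeff_zero])
    have hdeg : Q.natDegree ≤ c := by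
      rw [natDegree_le_iff_coeff_eq_zero]
      intro N hN
      rw [hQ, coeff_add, coeff_C, coeff_C_mul, coeff_X_pow,
        if_neg (by omega : ¬ N = 0), if_neg (by omega : ¬ N = c)]
      ring
    have hle : (H.filter fun x => (x 0, x 1) = p).card
        ≤ (Finset.univ.filter fun y => Q.eval y = 0).card := by
      apply Finset.card_le_card_of_injOn (fun x => x 2)
      · intro x hx
        simp only [Finset.mem_coe, Finset.mem_filter] at hx
        obtain ⟨hx1, hx2⟩ := hx
        rw [hH, Fin.sum_univ_three] at hx1
        have e0 : x 0 = p.1 := congrArg Prod.fst hx2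
        have e1 : x 1 = p.2 := congrArg Prod.snd hx2
        simp only [Finset.mem_coe, Finset.mem_filter, Finset.mem_univ, true_and, hQ, eval_add, eval_C,
          eval_mul, eval_pow, eval_X]
        rw [← e0, ← e1]
        linear_combination hx1
      · intro x hx y hy h
        simp only [Finset.coe_filter, Set.mem_setOf_eq] at hx hy
        have e0 : x 0 = y 0 :=
          (congrArg Prod.fst hx.2).trans (congrArg Prod.fst hy.2).symm
        have e1 : x 1 = y 1 :=
          (congrArg Prod.snd hx.2).trans (congrArg Prod.snd hy.2).symm
        funext i
        fin_cases i <;> assumption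
    exact hle.trans ((root_count_le' Q hne).trans hdeg)
  calc H.card ≤ c * (H.image (fun x => (x 0, x 1))).card :=
        Finset.card_le_mul_card_image _ _ key
    _ ≤ c * Fintype.card (F × F) := by
        exact Nat.mul_le_mul_left _ ((Finset.card_le_univ _).trans (le_of_eq Finset.card_univ))
    _ = c * Fintype.card F ^ 2 := by rw [Fintype.card_prod, sq]

end Aux

/-- Let `𝔽_q` be a finite field of characteristic greater than `c ≥ 2`,
`χ` a nontrivial additive character, `a₁, a₂, a₃ ≠ 0`, and
`H₀ = {x ∈ 𝔽_q³ : a₁x₁^c + a₂x₂^c + a₃x₃^c = 0}`.  Then for every `m ≠ 0` one has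
`|Σ_{x∈H₀} χ(m·x)| ≤ c·q²/(q − 1)`; in particular `|Ĥ₀(m)| ≤ c·q²/(q³(q−1)) ≲ q^{−2}`. -/
theorem stmt_13 {F : Type} [Field F] [Fintype F] [DecidableEq F]
    (c : ℕ) (hc : 2 ≤ c) (hchar : c < ringChar F)
    (χ : AddChar F ℂ) (hχ : χ ≠ 1)
    (a : Fin 3 → F) (ha : ∀ i, a i ≠ 0)
    (H : Finset (Fin 3 → F)) (hH : ∀ x, x ∈ H ↔ ∑ i, a i * x i ^ c = 0) :
    ∀ m : Fin 3 → F, m ≠ 0 →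
      ‖∑ x ∈ H, χ (∑ i, m i * x i)‖
          ≤ (c : ℝ) * (Fintype.card F : ℝ) ^ 2 / ((Fintype.card F : ℝ) - 1)
      ∧ ‖((Fintype.card F : ℂ))⁻¹ ^ 3 * ∑ x ∈ H, χ (-(∑ i, m i * x i))‖
          ≤ (c : ℝ) * (Fintype.card F : ℝ) ^ 2
              / ((Fintype.card F : ℝ) ^ 3 * ((Fintype.card F : ℝ) - 1)) := by
  classical
  have hq2 : 2 ≤ Fintype.card F := Fintype.one_lt_card
  have hq0 : (0:ℝ) < (Fintype.card F : ℝ) := by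
    exact_mod_cast Fintype.card_pos
  have hq1R : (0:ℝ) < (Fintype.card F : ℝ) - 1 := by
    have : (2:ℝ) ≤ (Fintype.card F : ℝ) := by exact_mod_cast hq2
    linarith
  -- character sum over a line
  have hcs : ∀ t : F, (∑ r : F, χ (r * t)) = if t = 0 then (Fintype.card F : ℂ) else 0 := by
    intro t
    by_cases ht : t = 0
    · simp [ht, Finset.card_univ]
    · rw [if_neg ht]
      have h1 : χ.mulShift t ≠ 1 := by
        intro h
        exact hχ ((AddChar.mulShift_unit_eq_one_iff χ (Ne.isUnit ht)).mp h)
      have h0 : χ.mulShift t ≠ 0 := h1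
      have h2 := AddChar.sum_eq_zero_iff_ne_zero.mpr h0
      simpa [AddChar.mulShift_apply, mul_comm] using h2
  -- dilation invariance of H
  have hcone : ∀ (r : F), ∀ x ∈ H, (fun i => r * x i) ∈ H := by
    intro r x hx
    rw [hH] at hx ⊢
    calc ∑ i, a i * (r * x i) ^ c = r ^ c * ∑ i, a i * x i ^ c := by
          rw [Finset.mul_sum]
          exact Finset.sum_congr rfl fun i _ => by ring
      _ = 0 := by rw [hx, mul_zero]
  -- main bound
  have main : ∀ m : Fin 3 → F, m ≠ 0 →
      ‖∑ x ∈ H, χ (∑ i, m i * x i)‖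
        ≤ (c : ℝ) * (Fintype.card F : ℝ) ^ 2 / ((Fintype.card F : ℝ) - 1) := by
    intro m hm
    obtain ⟨j, hj⟩ : ∃ j, m j ≠ 0 := by
      by_contra h
      push_neg at h
      exact hm (funext h)
    set N := (H.filter fun x => ∑ i, m i * x i = 0).card with hNd
    have hNle : N ≤ c * Fintype.card F := by
      set σ : Equiv.Perm (Fin 3) := Equiv.swap j 2 with hσ
      have hcardeq : N = (Finset.univ.filter fun x : Fin 3 → F =>
          ∑ i, (a ∘ σ) i * x i ^ c = 0 ∧ ∑ i, (m ∘ σ) i * x i = 0).card := by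
        rw [hNd]
        apply Finset.card_bij (fun x _ => x ∘ σ)
        · intro x hx
          simp only [Finset.mem_filter] at hx
          obtain ⟨hx1, hx2⟩ := hx
          rw [hH] at hx1
          simp only [Finset.mem_filter, Finset.mem_univ, true_and, Function.comp_apply]
          exact ⟨(Equiv.sum_comp σ (fun i => a i * x i ^ c)).trans hx1,
                 (Equiv.sum_comp σ (fun i => m i * x i)).trans hx2⟩
        · intro x hx y hy hxy
          funext i
          have h' := congrFun hxy (σ.symm i)
          simpa [Function.comp, Equiv.apply_symm_apply] using h'
        · intro y hy
          simp only [Finset.mem_filter, Finset.mem_univ, true_and,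
            Function.comp_apply] at hy
          refine ⟨y ∘ σ.symm, ?_, ?_⟩
          · simp only [Finset.mem_filter]
            constructor
            · rw [hH]
              simp only [Function.comp_apply]
              rw [← Equiv.sum_comp σ (fun i => a i * (y (σ.symm i)) ^ c)]
              simpa using hy.1
            · simp only [Function.comp_apply]
              rw [← Equiv.sum_comp σ (fun i => m i * (y (σ.symm i)))]
              simpa using hy.2
          · funext i
            simp
      rw [hcardeq]
      refine keyN' c hc hchar (a ∘ σ) (fun i => ha _) (m ∘ σ) ?_
      show m (σ 2) ≠ 0
      rw [hσ]
      rw [Equiv.swap_apply_right]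
      exact hj
    have hHle : H.card ≤ c * Fintype.card F ^ 2 := cardH' c hc a (ha 2) H hH
    set S := ∑ x ∈ H, χ (∑ i, m i * x i) with hSdef
    have hdil : ∀ r : F, r ≠ 0 → ∑ x ∈ H, χ (r * ∑ i, m i * x i) = S := by
      intro r hr
      rw [hSdef]
      refine Finset.sum_nbij' (fun x => fun i => r * x i) (fun x => fun i => r⁻¹ * x i)
        (fun x hx => hcone r x hx) (fun x hx => hcone r⁻¹ x hx) ?_ ?_ ?_
      · intro x _
        funext i
        show r⁻¹ * (r * x i) = x i
        rw [← mul_assoc, inv_mul_cancel₀ hr, one_mul]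
      · intro x _
        funext i
        show r * (r⁻¹ * x i) = x i
        rw [← mul_assoc, mul_inv_cancel₀ hr, one_mul]
      · intro x _
        congr 1
        rw [Finset.mul_sum]
        exact Finset.sum_congr rfl fun i _ => by ring
    have key1 : ((Fintype.card F : ℂ) - 1) * S
        = (Fintype.card F : ℂ) * N - H.card := by
      have e1 : ((Fintype.card F : ℂ) - 1) * S
          = ∑ r ∈ Finset.univ.erase (0:F), ∑ x ∈ H, χ (r * ∑ i, m i * x i) := by
        rw [Finset.sum_congr rfl (fun r hr => hdil r (Finset.ne_of_mem_erase hr))]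
        rw [Finset.sum_const, Finset.card_erase_of_mem (Finset.mem_univ _),
          Finset.card_univ, nsmul_eq_mul]
        congr 1
        rw [Nat.cast_sub (le_trans one_le_two hq2), Nat.cast_one]
      rw [e1, Finset.sum_comm]
      have e2 : ∀ x ∈ H, ∑ r ∈ Finset.univ.erase (0:F), χ (r * ∑ i, m i * x i)
          = (if (∑ i, m i * x i) = 0 then (Fintype.card F:ℂ) else 0) - 1 := by
        intro x _
        rw [Finset.sum_erase_eq_sub (Finset.mem_univ 0), hcs]
        simp
      rw [Finset.sum_congr rfl e2, Finset.sum_sub_distrib, Finset.sum_const,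
        nsmul_eq_mul, mul_one, ← Finset.sum_filter, Finset.sum_const, nsmul_eq_mul]
      rw [mul_comm]
    have htri : ‖(Fintype.card F:ℂ) * N - H.card‖
        ≤ (c:ℝ) * (Fintype.card F:ℝ)^2 := by
      have hcast : ((Fintype.card F:ℂ) * N - H.card)
          = ((((Fintype.card F * N : ℕ) : ℝ) - ((H.card : ℕ):ℝ) : ℝ) : ℂ) := by
        push_cast
        ring
      rw [hcast, Complex.norm_real, Real.norm_eq_abs]
      have h1 : Fintype.card F * N ≤ c * Fintype.card F ^ 2 := by
        calc Fintype.card F * N ≤ Fintype.card F * (c * Fintype.card F) :=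
              Nat.mul_le_mul_left _ hNle
          _ = c * Fintype.card F ^ 2 := by ring
      have h1R : ((Fintype.card F * N : ℕ):ℝ) ≤ (c:ℝ) * (Fintype.card F:ℝ)^2 := by
        calc ((Fintype.card F * N : ℕ):ℝ) ≤ ((c * Fintype.card F ^ 2 : ℕ):ℝ) :=
              Nat.cast_le.mpr h1
          _ = (c:ℝ) * (Fintype.card F:ℝ)^2 := by push_cast; ring
      have h2R : ((H.card : ℕ):ℝ) ≤ (c:ℝ) * (Fintype.card F:ℝ)^2 := by
        calc ((H.card : ℕ):ℝ) ≤ ((c * Fintype.card F ^ 2 : ℕ):ℝ) := Nat.cast_le.mpr hHle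
          _ = (c:ℝ) * (Fintype.card F:ℝ)^2 := by push_cast; ring
      have h3 : (0:ℝ) ≤ ((Fintype.card F * N : ℕ):ℝ) := Nat.cast_nonneg _
      have h4 : (0:ℝ) ≤ ((H.card : ℕ):ℝ) := Nat.cast_nonneg _
      rw [abs_le]
      constructor <;> linarith
    have habs : ((Fintype.card F:ℝ) - 1) * ‖S‖
        ≤ (c:ℝ) * (Fintype.card F:ℝ)^2 := by
      have hk := congrArg (‖·‖) key1
      rw [norm_mul] at hk
      have habs1 : ‖(Fintype.card F:ℂ) - 1‖ = (Fintype.card F:ℝ) - 1 := by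
        rw [show ((Fintype.card F:ℂ) - 1) = (((Fintype.card F:ℝ) - 1 : ℝ) : ℂ) by
          push_cast; ring]
        rw [Complex.norm_real, Real.norm_eq_abs, abs_of_pos hq1R]
      rw [habs1] at hk
      rw [hk]
      exact htri
    rw [le_div_iff₀ hq1R]
    calc ‖S‖ * ((Fintype.card F:ℝ) - 1)
        = ((Fintype.card F:ℝ) - 1) * ‖S‖ := by ring
      _ ≤ (c:ℝ) * (Fintype.card F:ℝ)^2 := habs
  -- conclusion
  intro m hm
  refine ⟨main m hm, ?_⟩
  have hm' : (fun i => -(m i)) ≠ 0 := by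
    intro h
    apply hm
    funext i
    have := congrFun h i
    simpa using this
  have h2 := main (fun i => -(m i)) hm'
  have hsum : (∑ x ∈ H, χ (-(∑ i, m i * x i)))
      = ∑ x ∈ H, χ (∑ i, (fun i => -(m i)) i * x i) := by
    refine Finset.sum_congr rfl fun x _ => ?_
    congr 1
    rw [← Finset.sum_neg_distrib]
    exact Finset.sum_congr rfl fun i _ => by ring
  rw [hsum, norm_mul, norm_pow, norm_inv, Complex.norm_natCast]
  calc ((Fintype.card F:ℝ))⁻¹ ^ 3 * ‖∑ x ∈ H, χ (∑ i, (fun i => -(m i)) i * x i)‖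
      ≤ ((Fintype.card F:ℝ))⁻¹ ^ 3
          * ((c:ℝ) * (Fintype.card F:ℝ)^2 / ((Fintype.card F:ℝ) - 1)) := by
        apply mul_le_mul_of_nonneg_left h2
        positivity
    _ = (c : ℝ) * (Fintype.card F : ℝ) ^ 2
          / ((Fintype.card F : ℝ) ^ 3 * ((Fintype.card F : ℝ) - 1)) := by
        field_simp
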